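/- Let X be a thick building of type (W,S), π : Ch(X) → {0,1} a map, and E ⊆ W the set of w ∈ W such that δ(ω,ω') = w implies π(ω) = π(ω'). Let J ⊆ S be minimal such that E ⊆ W_J (the standard parabolic subgroup generated by J). Then π is constant on every J-residue of X. -/

import Mathlib

noncomputable section

/-- The set `E` of Weyl group elements `w` such that any two chambers at Weyl distance `w`
have the same image under `π`. -/
def distInvariantSet {W C : Type*} (δ : C → C → W) (π : C → Bool) : Set W :=
  {w | ∀ ω ω' : C, δ ω ω' = w → π ω = π ω'}

/-- Let `X` (chambers `C`) be a thick building of type `(W,S)` with Weyl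
distance `δ`, `π : Ch(X) → {0,1}` a map, and `E ⊆ W` the set of `w` such that
`δ(ω,ω') = w` implies `π(ω) = π(ω')`.  If `J ⊆ S` is minimal with `E ⊆ W_J` (the standard
parabolic subgroup generated by `J`), then `π` is constant on every `J`-residue of `X`. -/
theorem pi_constant_on_J_residues
    {B W : Type*} [Group W] {M : CoxeterMatrix B} (cs : CoxeterSystem M W)
    {C : Type*} (δ : C → C → W)
    (hsymm : ∀ c d, δ d c = (δ c d)⁻¹)
    (WD1 : ∀ c d, δ c d = 1 ↔ c = d)
    (WD2 : ∀ (c d c' : C) (i : B), δ c' c = cs.simple i →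
      (δ c' d = cs.simple i * δ c d ∨ δ c' d = δ c d) ∧
      (cs.length (cs.simple i * δ c d) = cs.length (δ c d) + 1 →
        δ c' d = cs.simple i * δ c d))
    (WD3 : ∀ (c d : C) (i : B), ∃ c' : C,
      δ c' c = cs.simple i ∧ δ c' d = cs.simple i * δ c d)
    (thick : ∀ (c : C) (i : B), ∃ d e : C, d ≠ e ∧
      δ c d = cs.simple i ∧ δ c e = cs.simple i)
    (π : C → Bool) (J : Set B)
    (hJ : distInvariantSet δ π ⊆ (Subgroup.closure (cs.simple '' J) : Set W))
    (hmin : ∀ J' : Set B,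
      distInvariantSet δ π ⊆ (Subgroup.closure (cs.simple '' J') : Set W) → J ⊆ J') :
    ∀ ω ω' : C, δ ω ω' ∈ Subgroup.closure (cs.simple '' J) → π ω = π ω' := by
  set E : Set W := distInvariantSet δ π with hEdef
  -- basic facts
  have hE1 : (1 : W) ∈ E := by
    intro ω ω' h
    rw [WD1] at h
    rw [h]
  have hEinv : ∀ w ∈ E, w⁻¹ ∈ E := by
    intro w hw ω ω' h
    exact (hw ω' ω (by rw [hsymm, h, inv_inv])).symm
  -- decomposition of elements of positive length
  have hdecomp : ∀ (n : ℕ) (w : W), cs.length w = n + 1 →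
      ∃ (i : B) (w' : W), w = cs.simple i * w' ∧ cs.length w' = n ∧
        cs.length (cs.simple i * w') = cs.length w' + 1 := by
    intro n w hw
    obtain ⟨ω, hlen, rfl⟩ := cs.exists_reduced_word w
    cases ω with
    | nil => simp [cs.wordProd_nil, cs.length_one] at hw
    | cons i l =>
      have e1 : cs.wordProd (i :: l) = cs.simple i * cs.wordProd l := cs.wordProd_cons i l
      have h1 : cs.length (cs.wordProd l) ≤ l.length := cs.length_wordProd_le l
      have h2 : cs.length (cs.wordProd (i :: l)) ≤ 1 + cs.length (cs.wordProd l) := by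
        rw [e1]
        simpa [cs.length_simple] using cs.length_mul_le (cs.simple i) (cs.wordProd l)
      have hln : l.length = n := by
        have hlen := hlen.eq
        simp only [List.length_cons] at hlen; omega
      have h3 : cs.length (cs.wordProd l) = n := by omega
      exact ⟨i, cs.wordProd l, e1, h3, by rw [← e1, hw, h3]⟩
  -- existence of chambers at prescribed distance
  have hadj : ∀ (n : ℕ) (u : W), cs.length u = n → ∀ c d : C,
      ∃ e, δ e c = u ∧ δ e d = u * δ c d := by
    intro n
    induction n with
    | zero =>
      intro u hu c d
      rw [cs.length_eq_zero_iff] at hu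
      exact ⟨c, by simp [hu, (WD1 c c).mpr rfl]⟩
    | succ n ih =>
      intro u hu c d
      obtain ⟨i, u', rfl, hu', hred⟩ := hdecomp n u hu
      obtain ⟨e', he'c, he'd⟩ := ih u' hu' c d
      obtain ⟨c', hc'e', hc'd⟩ := WD3 e' d i
      refine ⟨c', ?_, by rw [hc'd, he'd, mul_assoc]⟩
      have := (WD2 e' c c' i hc'e').2
      rw [he'c] at this
      exact this (by rw [hu', hred, hu'])
  -- E is closed under multiplication
  have hEmul : ∀ u ∈ E, ∀ v ∈ E, u * v ∈ E := by
    intro u hu v hv ω ω' h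
    obtain ⟨e, heω, heω'⟩ := hadj (cs.length u⁻¹) u⁻¹ rfl ω ω'
    have h1 : π ω = π e := hu ω e (by rw [hsymm, heω, inv_inv])
    have h2 : π e = π ω' := hv e ω' (by rw [heω', h, inv_mul_cancel_left])
    rw [h1, h2]
  -- reduction lemma: first letter of a reduced decomposition of an element of E is in E
  have claim_s : ∀ (i : B) (w' : W), cs.length (cs.simple i * w') = cs.length w' + 1 →
      cs.simple i * w' ∈ E → cs.simple i ∈ E := by
    intro i w' hred hmem a b hab
    -- find a third chamber c in the i-panel of a, distinct from b
    obtain ⟨d, e, hde, had, hae⟩ := thick a i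
    obtain ⟨c, hac, hcb⟩ : ∃ c, δ a c = cs.simple i ∧ c ≠ b := by
      by_cases hd : d = b
      · exact ⟨e, hae, fun h => hde (hd ▸ h ▸ rfl)⟩
      · exact ⟨d, had, hd⟩
    have hba : δ b a = cs.simple i := by
      rw [hsymm, hab, cs.inv_simple]
    have hbc : δ b c = cs.simple i := by
      rcases (WD2 a c b i hba).1 with h | h
      · rw [hac, cs.simple_mul_simple_self] at h
        exact absurd ((WD1 b c).mp h ▸ rfl) (Ne.symm hcb)
      · rw [h, hac]
    -- find f with δ c f = w'
    obtain ⟨f, hfc, -⟩ := hadj (cs.length w'⁻¹) w'⁻¹ rfl c c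
    have hcf : δ c f = w' := by rw [hsymm, hfc, inv_inv]
    have haf : δ a f = cs.simple i * w' := by
      have := (WD2 c f a i hac).2
      rw [hcf] at this
      exact this hred
    have hbf : δ b f = cs.simple i * w' := by
      have := (WD2 c f b i hbc).2
      rw [hcf] at this
      exact this hred
    rw [hmem a f haf, hmem b f hbf]
  have claim_w : ∀ (i : B) (w' : W), cs.length (cs.simple i * w') = cs.length w' + 1 →
      cs.simple i * w' ∈ E → w' ∈ E := by
    intro i w' hred hmem c d hcd
    obtain ⟨c', hc'c, hc'd⟩ := WD3 c d i
    have h1 : π c' = π d := hmem c' d (by rw [hc'd, hcd])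
    have h2 : π c' = π c := claim_s i w' hred hmem c' c hc'c
    rw [← h2, h1]
  -- the set of indices whose simple reflection lies in E
  set J' : Set B := {i | cs.simple i ∈ E} with hJ'def
  have hEJ'aux : ∀ (n : ℕ) (w : W), cs.length w = n → w ∈ E →
      w ∈ (Subgroup.closure (cs.simple '' J') : Set W) := by
    intro n
    induction n with
    | zero =>
      intro w hn _
      rw [cs.length_eq_zero_iff] at hn
      rw [hn]; exact Subgroup.one_mem _
    | succ n ih =>
      intro w hn hw
      obtain ⟨i, w', rfl, hw', hred⟩ := hdecomp n w hn
      have hsi : cs.simple i ∈ E := claim_s i w' hred hw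
      have hw'E : w' ∈ E := claim_w i w' hred hw
      exact Subgroup.mul_mem _
        (Subgroup.subset_closure ⟨i, hsi, rfl⟩)
        (ih w' hw' hw'E)
  have hEJ' : E ⊆ (Subgroup.closure (cs.simple '' J') : Set W) :=
    fun w hw => hEJ'aux (cs.length w) w rfl hw
  have hJJ' : J ⊆ J' := hmin J' hEJ'
  -- conclude: every element of W_J lies in E
  intro ω ω' hw
  refine Subgroup.closure_induction (p := fun w _ => w ∈ E) ?_ hE1
    (fun x y _ _ hx hy => hEmul x hx y hy) (fun x _ hx => hEinv x hx) hw ω ω' rfl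
  rintro x ⟨i, hi, rfl⟩
  exact hJJ' hi
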